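/- Let W be a real symmetric n×n matrix with x W xᵀ ≥ 1 for every nonzero x ∈ ℤⁿ, and let P be an n×n permutation matrix with WP = PW. For m ≥ 1 define the mn×mn block tridiagonal matrix W_m whose m diagonal blocks all equal W, whose superdiagonal blocks all equal −(1/2)PW, whose subdiagonal blocks all equal −(1/2)PᵀW, and whose other blocks are zero. Then x W_m xᵀ ≥ 1 for every nonzero x ∈ ℤ^{mn}. -/

import Mathlib

open Matrix


lemma perm_mulVec {n : ℕ} (σ : Equiv.Perm (Fin n)) (u : Fin n → ℝ) :
    (σ.permMatrix ℝ) *ᵥ u = fun a => u (σ a) := by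
  funext a
  simp [Equiv.Perm.permMatrix, mulVec, dotProduct, PEquiv.toMatrix_apply,
    Equiv.toPEquiv_apply]

lemma perm_mul_transpose {n : ℕ} (σ : Equiv.Perm (Fin n)) :
    (σ.permMatrix ℝ) * (σ.permMatrix ℝ)ᵀ = 1 := by
  ext i j
  simp [Equiv.Perm.permMatrix, mul_apply, PEquiv.toMatrix_apply,
    Equiv.toPEquiv_apply, one_apply, Finset.sum_ite_eq, eq_comm]
  rw [Finset.sum_eq_single (σ i) (fun b _ hb => by simp [hb]) (by simp)]
  simp [Equiv.symm_apply_eq, eq_comm]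

lemma sum_succ_pairs {k : ℕ} (g : Fin (k+1) → Fin (k+1) → ℝ) :
    ∑ i : Fin (k+1), ∑ j : Fin (k+1), (if (i:ℕ)+1 = (j:ℕ) then g i j else 0)
      = ∑ i : Fin k, g i.castSucc i.succ := by
  rw [Fin.sum_univ_castSucc]
  have hlast : ∑ j : Fin (k+1), (if ((Fin.last k : Fin (k+1)):ℕ)+1 = (j:ℕ) then g (Fin.last k) j else 0) = 0 := by
    apply Finset.sum_eq_zero
    intro j _
    have : ¬ ((Fin.last k : Fin (k+1)):ℕ)+1 = (j:ℕ) := by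
      have := j.isLt; simp [Fin.last]; omega
    exact if_neg this
  rw [hlast, add_zero]
  apply Finset.sum_congr rfl
  intro i _
  rw [Fin.sum_univ_succ]
  have h0 : ¬ ((i.castSucc:ℕ)+1 = ((0 : Fin (k+1)):ℕ)) := by simp
  rw [if_neg h0, zero_add]
  have : ∀ j : Fin k, (if ((i.castSucc:ℕ)+1 = ((j.succ : Fin (k+1)):ℕ)) then g i.castSucc j.succ else 0)
      = if i = j then g i.castSucc j.succ else 0 := by
    intro j
    congr 1
    simp [Fin.ext_iff]
  simp_rw [this]
  simp

lemma dot_W_symm {n : ℕ} (W : Matrix (Fin n) (Fin n) ℝ) (hsymm : W.IsSymm)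
    (u v : Fin n → ℝ) : u ⬝ᵥ W *ᵥ v = v ⬝ᵥ W *ᵥ u := by
  rw [dotProduct_mulVec, ← mulVec_transpose, hsymm.eq, dotProduct_comm]

lemma dot_adjoint {n : ℕ} (P : Matrix (Fin n) (Fin n) ℝ)
    (u w : Fin n → ℝ) : (Pᵀ *ᵥ u) ⬝ᵥ w = u ⬝ᵥ (P *ᵥ w) := by
  rw [mulVec_transpose, ← dotProduct_mulVec]

lemma transpose_perm {n : ℕ} (σ : Equiv.Perm (Fin n)) :
    (σ.permMatrix ℝ)ᵀ = (σ⁻¹).permMatrix ℝ := by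
  rw [Equiv.Perm.permMatrix, Equiv.Perm.permMatrix, ← PEquiv.toMatrix_symm,
    ← Equiv.toPEquiv_symm]
  rfl

/-- The block tridiagonal matrix `W_m` with diagonal blocks `W`, superdiagonal blocks
`-(1/2) P W` and subdiagonal blocks `-(1/2) Pᵀ W`. -/
noncomputable def blockTridiag (m n : ℕ) (W P : Matrix (Fin n) (Fin n) ℝ) :
    Matrix (Fin m × Fin n) (Fin m × Fin n) ℝ :=
  Matrix.of fun x y =>
    if (x.1 : ℕ) = (y.1 : ℕ) then W x.2 y.2
    else if (x.1 : ℕ) + 1 = (y.1 : ℕ) then -(1 / 2) * (P * W) x.2 y.2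
    else if (y.1 : ℕ) + 1 = (x.1 : ℕ) then -(1 / 2) * (Pᵀ * W) x.2 y.2
    else 0

/-- If `W` is integral positive definite, symmetric and commutes with the permutation
matrix `P`, then the block tridiagonal matrix `W_m` is again integral positive definite. -/
theorem blockTridiag_integral_posDef (m n : ℕ) (hm : 1 ≤ m)
    (W P : Matrix (Fin n) (Fin n) ℝ)
    (hsymm : W.IsSymm)
    (hint : ∀ x : Fin n → ℤ, x ≠ 0 →
      1 ≤ (fun i => (x i : ℝ)) ⬝ᵥ W.mulVec (fun i => (x i : ℝ)))
    (hP : ∃ σ : Equiv.Perm (Fin n), P = σ.permMatrix ℝ)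
    (hcomm : W * P = P * W) :
    ∀ x : Fin m × Fin n → ℤ, x ≠ 0 →
      1 ≤ (fun i => (x i : ℝ)) ⬝ᵥ (blockTridiag m n W P).mulVec (fun i => (x i : ℝ)) := by
  obtain ⟨σ, rfl⟩ := hP
  obtain ⟨k, rfl⟩ : ∃ k, m = k + 1 := ⟨m - 1, by omega⟩
  intro x hx
  set P := σ.permMatrix ℝ with hPdef
  -- abbreviations
  set r : Fin (k+1) → Fin n → ℝ := fun i a => (x (i, a) : ℝ) with hrdef
  set z : Fin (k+1) → Fin n → ℤ := fun i a => x (i, a) with hzdef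
  set d : Fin k → Fin n → ℤ := fun i a => z i.castSucc (σ⁻¹ a) - z i.succ a with hddef
  set qz : (Fin n → ℤ) → ℝ :=
    fun u => (fun a => (u a : ℝ)) ⬝ᵥ W *ᵥ (fun a => (u a : ℝ)) with hqzdef
  -- nonnegativity of qz
  have hq0 : ∀ u : Fin n → ℤ, 0 ≤ qz u := by
    intro u
    by_cases h : u = 0
    · have : (fun a => ((u a : ℤ) : ℝ)) = (0 : Fin n → ℝ) := by
        funext a; simp [h]
      simp only [hqzdef, this]
      simp
    · exact le_trans zero_le_one (hint u h)
  have hq1 : ∀ u : Fin n → ℤ, u ≠ 0 → 1 ≤ qz u := fun u h => hint u h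
  -- orthogonality facts
  have hPPt : P * Pᵀ = 1 := perm_mul_transpose σ
  have hPWPt : P * W * Pᵀ = W := by
    rw [← hcomm, Matrix.mul_assoc, hPPt, Matrix.mul_one]
  -- the main algebraic identity
  have hmain : (fun p => (x p : ℝ)) ⬝ᵥ (blockTridiag (k+1) n W P).mulVec (fun p => (x p : ℝ))
      = (1/2) * qz (z 0) + (1/2) * qz (z (Fin.last k)) + (1/2) * ∑ i : Fin k, qz (d i) := by
    set cross : Fin k → ℝ := fun t => r t.castSucc ⬝ᵥ ((P * W) *ᵥ r t.succ) with hcrossdef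
    -- dot-product expansion helpers
    have hdot1 : ∀ (A : Matrix (Fin n) (Fin n) ℝ) (u v : Fin n → ℝ),
        ∑ a : Fin n, ∑ b : Fin n, u a * (A a b * v b) = u ⬝ᵥ A *ᵥ v := by
      intro A u v
      simp [dotProduct, mulVec, Finset.mul_sum]
    have hdot2 : ∀ (A : Matrix (Fin n) (Fin n) ℝ) (u v : Fin n → ℝ),
        ∑ a : Fin n, ∑ b : Fin n, u a * (-(1/2) * A a b * v b)
          = -(1/2) * (u ⬝ᵥ A *ᵥ v) := by
      intro A u v
      rw [← hdot1 A u v, Finset.mul_sum]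
      refine Finset.sum_congr rfl fun a _ => ?_
      rw [Finset.mul_sum]
      refine Finset.sum_congr rfl fun b _ => ?_
      ring
    -- Step A : expand the quadratic form
    have hA1 : (fun p => (x p : ℝ)) ⬝ᵥ (blockTridiag (k+1) n W P).mulVec (fun p => (x p : ℝ))
        = ∑ i : Fin (k+1), ∑ j : Fin (k+1), ∑ a : Fin n, ∑ b : Fin n,
            r i a * (blockTridiag (k+1) n W P (i,a) (j,b) * r j b) := by
      simp only [mulVec, dotProduct, Fintype.sum_prod_type, Finset.mul_sum]
      exact Finset.sum_congr rfl fun i _ => Finset.sum_comm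
    have hblock : ∀ i j : Fin (k+1),
        (∑ a : Fin n, ∑ b : Fin n,
            r i a * (blockTridiag (k+1) n W P (i,a) (j,b) * r j b))
        = (if (i:ℕ) = (j:ℕ) then r i ⬝ᵥ W *ᵥ r j else 0)
          + (if (i:ℕ)+1 = (j:ℕ) then -(1/2) * (r i ⬝ᵥ (P*W) *ᵥ r j) else 0)
          + (if (j:ℕ)+1 = (i:ℕ) then -(1/2) * (r i ⬝ᵥ (Pᵀ*W) *ᵥ r j) else 0) := by
      intro i j
      by_cases h1 : (i:ℕ) = (j:ℕ)
      · have h2 : ¬ ((i:ℕ)+1 = (j:ℕ)) := by omega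
        have h3 : ¬ ((j:ℕ)+1 = (i:ℕ)) := by omega
        simp only [blockTridiag, of_apply, if_pos h1, if_neg h2, if_neg h3,
          add_zero, zero_add]
        exact hdot1 W (r i) (r j)
      · by_cases h2 : (i:ℕ)+1 = (j:ℕ)
        · have h3 : ¬ ((j:ℕ)+1 = (i:ℕ)) := by omega
          simp only [blockTridiag, of_apply, if_neg h1, if_pos h2, if_neg h3,
            add_zero, zero_add]
          exact hdot2 (P*W) (r i) (r j)
        · by_cases h3 : (j:ℕ)+1 = (i:ℕ)
          · simp only [blockTridiag, of_apply, if_neg h1, if_neg h2, if_pos h3,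
              add_zero, zero_add]
            exact hdot2 (Pᵀ*W) (r i) (r j)
          · simp only [blockTridiag, of_apply, if_neg h1, if_neg h2, if_neg h3,
              add_zero, zero_add]
            simp
    have hE1 : ∑ i : Fin (k+1), ∑ j : Fin (k+1),
        (if (i:ℕ) = (j:ℕ) then r i ⬝ᵥ W *ᵥ r j else 0)
        = ∑ i : Fin (k+1), r i ⬝ᵥ W *ᵥ r i := by
      refine Finset.sum_congr rfl fun i _ => ?_
      simp [Fin.val_inj]
    have hE2 : ∑ i : Fin (k+1), ∑ j : Fin (k+1),
        (if (i:ℕ)+1 = (j:ℕ) then -(1/2) * (r i ⬝ᵥ (P*W) *ᵥ r j) else 0)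
        = ∑ t : Fin k, -(1/2) * cross t :=
      sum_succ_pairs (fun i j => -(1/2) * (r i ⬝ᵥ (P*W) *ᵥ r j))
    have hsub : ∀ t : Fin k, r t.succ ⬝ᵥ (Pᵀ*W) *ᵥ r t.castSucc = cross t := by
      intro t
      rw [← Matrix.mulVec_mulVec, dotProduct_comm, dot_adjoint,
        dotProduct_comm, dot_W_symm W hsymm, Matrix.mulVec_mulVec, hcomm]
    have hE3 : ∑ i : Fin (k+1), ∑ j : Fin (k+1),
        (if (j:ℕ)+1 = (i:ℕ) then -(1/2) * (r i ⬝ᵥ (Pᵀ*W) *ᵥ r j) else 0)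
        = ∑ t : Fin k, -(1/2) * cross t := by
      rw [Finset.sum_comm]
      rw [sum_succ_pairs (fun a b => -(1/2) * (r b ⬝ᵥ (Pᵀ*W) *ᵥ r a))]
      refine Finset.sum_congr rfl fun t _ => ?_
      rw [hsub t]
    have hA : (fun p => (x p : ℝ)) ⬝ᵥ (blockTridiag (k+1) n W P).mulVec (fun p => (x p : ℝ))
        = ∑ i : Fin (k+1), r i ⬝ᵥ W *ᵥ r i - ∑ t : Fin k, cross t := by
      rw [hA1]
      calc ∑ i : Fin (k+1), ∑ j : Fin (k+1), ∑ a : Fin n, ∑ b : Fin n,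
            r i a * (blockTridiag (k+1) n W P (i,a) (j,b) * r j b)
          = ∑ i : Fin (k+1), ∑ j : Fin (k+1),
            ((if (i:ℕ) = (j:ℕ) then r i ⬝ᵥ W *ᵥ r j else 0)
            + (if (i:ℕ)+1 = (j:ℕ) then -(1/2) * (r i ⬝ᵥ (P*W) *ᵥ r j) else 0)
            + (if (j:ℕ)+1 = (i:ℕ) then -(1/2) * (r i ⬝ᵥ (Pᵀ*W) *ᵥ r j) else 0)) :=
            Finset.sum_congr rfl fun i _ => Finset.sum_congr rfl fun j _ => hblock i j
        _ = (∑ i : Fin (k+1), ∑ j : Fin (k+1),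
              (if (i:ℕ) = (j:ℕ) then r i ⬝ᵥ W *ᵥ r j else 0))
            + (∑ i : Fin (k+1), ∑ j : Fin (k+1),
              (if (i:ℕ)+1 = (j:ℕ) then -(1/2) * (r i ⬝ᵥ (P*W) *ᵥ r j) else 0))
            + (∑ i : Fin (k+1), ∑ j : Fin (k+1),
              (if (j:ℕ)+1 = (i:ℕ) then -(1/2) * (r i ⬝ᵥ (Pᵀ*W) *ᵥ r j) else 0)) := by
            simp [Finset.sum_add_distrib]
        _ = ∑ i : Fin (k+1), r i ⬝ᵥ W *ᵥ r i - ∑ t : Fin k, cross t := by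
            rw [hE1, hE2, hE3]
            have : ∑ t : Fin k, -(1/2) * cross t = -(1/2) * ∑ t : Fin k, cross t := by
              rw [Finset.mul_sum]
            rw [this]
            ring
    -- Step B : the right-hand side equals the same expression
    have hzr : ∀ i : Fin (k+1), qz (z i) = r i ⬝ᵥ W *ᵥ r i := fun i => rfl
    have hqd : ∀ t : Fin k, qz (d t)
        = (r t.castSucc ⬝ᵥ W *ᵥ r t.castSucc) + (r t.succ ⬝ᵥ W *ᵥ r t.succ)
          - 2 * cross t := by
      intro t
      have hcast : (fun a => ((d t a : ℤ) : ℝ)) = (Pᵀ *ᵥ r t.castSucc) - r t.succ := by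
        funext a
        show ((z t.castSucc (σ⁻¹ a) - z t.succ a : ℤ) : ℝ)
          = (Pᵀ *ᵥ r t.castSucc) a - r t.succ a
        rw [hPdef, transpose_perm, perm_mulVec]
        push_cast
        rfl
      have hTT : (Pᵀ *ᵥ r t.castSucc) ⬝ᵥ W *ᵥ (Pᵀ *ᵥ r t.castSucc)
          = r t.castSucc ⬝ᵥ W *ᵥ r t.castSucc := by
        rw [Matrix.mulVec_mulVec, dot_adjoint, Matrix.mulVec_mulVec,
          ← Matrix.mul_assoc, hPWPt]
      have hTv : (Pᵀ *ᵥ r t.castSucc) ⬝ᵥ W *ᵥ r t.succ = cross t := by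
        rw [dot_adjoint, Matrix.mulVec_mulVec]
      have hvT : r t.succ ⬝ᵥ W *ᵥ (Pᵀ *ᵥ r t.castSucc) = cross t := by
        rw [dot_W_symm W hsymm, hTv]
      show (fun a => ((d t a : ℤ) : ℝ)) ⬝ᵥ W *ᵥ (fun a => ((d t a : ℤ) : ℝ)) = _
      rw [hcast, Matrix.mulVec_sub, sub_dotProduct, dotProduct_sub, dotProduct_sub,
        hTT, hTv, hvT]
      ring
    have hsumd : ∑ t : Fin k, qz (d t)
        = (∑ i : Fin (k+1), r i ⬝ᵥ W *ᵥ r i) - (r (Fin.last k) ⬝ᵥ W *ᵥ r (Fin.last k))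
          + ((∑ i : Fin (k+1), r i ⬝ᵥ W *ᵥ r i) - (r 0 ⬝ᵥ W *ᵥ r 0))
          - 2 * ∑ t : Fin k, cross t := by
      have h1 : ∑ t : Fin k, (r t.castSucc ⬝ᵥ W *ᵥ r t.castSucc)
          = (∑ i : Fin (k+1), r i ⬝ᵥ W *ᵥ r i)
            - (r (Fin.last k) ⬝ᵥ W *ᵥ r (Fin.last k)) := by
        rw [Fin.sum_univ_castSucc (f := fun i : Fin (k+1) => r i ⬝ᵥ W *ᵥ r i)]
        ring
      have h2 : ∑ t : Fin k, (r t.succ ⬝ᵥ W *ᵥ r t.succ)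
          = (∑ i : Fin (k+1), r i ⬝ᵥ W *ᵥ r i) - (r 0 ⬝ᵥ W *ᵥ r 0) := by
        rw [Fin.sum_univ_succ (f := fun i : Fin (k+1) => r i ⬝ᵥ W *ᵥ r i)]
        ring
      calc ∑ t : Fin k, qz (d t)
          = ∑ t : Fin k, ((r t.castSucc ⬝ᵥ W *ᵥ r t.castSucc)
              + (r t.succ ⬝ᵥ W *ᵥ r t.succ) - 2 * cross t) :=
            Finset.sum_congr rfl fun t _ => hqd t
        _ = (∑ t : Fin k, (r t.castSucc ⬝ᵥ W *ᵥ r t.castSucc))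
              + (∑ t : Fin k, (r t.succ ⬝ᵥ W *ᵥ r t.succ))
              - 2 * ∑ t : Fin k, cross t := by
            rw [Finset.sum_sub_distrib, Finset.sum_add_distrib, ← Finset.mul_sum]
        _ = _ := by rw [h1, h2]
    rw [hA, hzr 0, hzr (Fin.last k), hsumd]
    ring
  rw [hmain]
  -- find first and last nonzero rows
  have hzsne : (Finset.univ.filter (fun i : Fin (k+1) => z i ≠ 0)).Nonempty := by
    obtain ⟨p, hp⟩ := Function.ne_iff.mp hx
    exact ⟨p.1, Finset.mem_filter.mpr ⟨Finset.mem_univ _, fun h0 => hp (by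
      have := congrFun h0 p.2
      simpa [hzdef] using this)⟩⟩
  set s := Finset.univ.filter (fun i : Fin (k+1) => z i ≠ 0) with hsdef
  set i0 := s.min' hzsne with hi0
  set j0 := s.max' hzsne with hj0
  have hi0mem : z i0 ≠ 0 := (Finset.mem_filter.mp (s.min'_mem hzsne)).2
  have hj0mem : z j0 ≠ 0 := (Finset.mem_filter.mp (s.max'_mem hzsne)).2
  have hi0le : i0 ≤ j0 := s.min'_le _ (s.max'_mem hzsne)
  have hmin : ∀ i : Fin (k+1), i < i0 → z i = 0 := by
    intro i hi
    by_contra h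
    exact absurd (s.min'_le i (Finset.mem_filter.mpr ⟨Finset.mem_univ _, h⟩)) (not_le.mpr hi)
  have hmax : ∀ i : Fin (k+1), j0 < i → z i = 0 := by
    intro i hi
    by_contra h
    exact absurd (s.le_max' i (Finset.mem_filter.mpr ⟨Finset.mem_univ _, h⟩)) (not_le.mpr hi)
  -- sum bounds
  have hsum0 : 0 ≤ ∑ i : Fin k, qz (d i) :=
    Finset.sum_nonneg (fun i _ => hq0 (d i))
  have hsum1 : ∀ t : Fin k, qz (d t) ≤ ∑ i : Fin k, qz (d i) := fun t =>
    Finset.single_le_sum (fun i _ => hq0 (d i)) (Finset.mem_univ t)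
  have hsum2 : ∀ t1 t2 : Fin k, t1 ≠ t2 →
      qz (d t1) + qz (d t2) ≤ ∑ i : Fin k, qz (d i) := by
    intro t1 t2 hne
    have := Finset.sum_le_sum_of_subset_of_nonneg (f := fun i => qz (d i))
      (Finset.subset_univ ({t1, t2} : Finset (Fin k))) (fun i _ _ => hq0 (d i))
    rwa [Finset.sum_pair hne] at this
  -- left-side contribution
  have hminside : 1 ≤ qz (z 0) ∨ ∃ t : Fin k, (t : ℕ) + 1 = (i0 : ℕ) ∧ 1 ≤ qz (d t) := by
    by_cases h0 : i0 = 0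
    · exact Or.inl (by rw [← h0]; exact hq1 _ hi0mem)
    · right
      have hpos : 0 < (i0 : ℕ) := by
        have := Fin.pos_iff_ne_zero.mpr h0
        exact this
      have hlt : (i0 : ℕ) - 1 < k := by have := i0.isLt; omega
      refine ⟨⟨(i0 : ℕ) - 1, hlt⟩, by simp; omega, ?_⟩
      have hcs : z (Fin.castSucc ⟨(i0 : ℕ) - 1, hlt⟩) = 0 := by
        apply hmin
        rw [Fin.lt_def]
        simp only [Fin.coe_castSucc]
        omega
      have hss : (Fin.succ ⟨(i0 : ℕ) - 1, hlt⟩ : Fin (k+1)) = i0 := by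
        rw [Fin.ext_iff]
        simp
        omega
      have hd : d ⟨(i0 : ℕ) - 1, hlt⟩ = fun a => - z i0 a := by
        funext a
        show z (Fin.castSucc ⟨(i0 : ℕ) - 1, hlt⟩) (σ⁻¹ a)
            - z (Fin.succ ⟨(i0 : ℕ) - 1, hlt⟩) a = - z i0 a
        rw [hcs, hss]
        simp
      apply hq1
      rw [hd]
      intro h
      apply hi0mem
      funext a
      have := congrFun h a
      simpa using this
  -- right-side contribution
  have hmaxside : 1 ≤ qz (z (Fin.last k)) ∨
      ∃ t : Fin k, (t : ℕ) = (j0 : ℕ) ∧ 1 ≤ qz (d t) := by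
    by_cases h0 : j0 = Fin.last k
    · exact Or.inl (by rw [← h0]; exact hq1 _ hj0mem)
    · right
      have hlt : (j0 : ℕ) < k := by
        have := j0.isLt
        have : (j0 : ℕ) ≠ k := fun h => h0 (Fin.ext (by simp [Fin.last, h]))
        omega
      refine ⟨⟨(j0 : ℕ), hlt⟩, rfl, ?_⟩
      have hcs : Fin.castSucc (⟨(j0 : ℕ), hlt⟩ : Fin k) = j0 := Fin.ext (by simp)
      have hss : z (Fin.succ ⟨(j0 : ℕ), hlt⟩) = 0 := by
        apply hmax
        rw [Fin.lt_def]
        simp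
      have hd : d ⟨(j0 : ℕ), hlt⟩ = fun a => z j0 (σ⁻¹ a) := by
        funext a
        show z (Fin.castSucc ⟨(j0 : ℕ), hlt⟩) (σ⁻¹ a)
            - z (Fin.succ ⟨(j0 : ℕ), hlt⟩) a = z j0 (σ⁻¹ a)
        rw [hcs, hss]
        simp
      apply hq1
      rw [hd]
      intro h
      apply hj0mem
      funext a
      have := congrFun h (σ a)
      simpa using this
  -- combine
  have hA0 : 0 ≤ qz (z 0) := hq0 _
  have hB0 : 0 ≤ qz (z (Fin.last k)) := hq0 _
  rcases hminside with hA | ⟨t1, ht1, hd1⟩ <;> rcases hmaxside with hB | ⟨t2, ht2, hd2⟩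
  · linarith
  · linarith [hsum1 t2]
  · linarith [hsum1 t1]
  · have hne : t1 ≠ t2 := by
      intro h
      rw [h] at ht1
      have : (i0 : ℕ) ≤ (j0 : ℕ) := hi0le
      omega
    linarith [hsum2 t1 t2 hne]
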